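/- arXiv:1810.11289 — 3 statements merged into one kernel-verified Lean document; each statement's English description precedes it below -/
import Mathlib

section
/- Let K ∈ ℝ, N ∈ (1,∞), and let h be an MCP(K,N)-density on a finite interval (a,b) ⊂ ℝ (with b − a ≤ π√((N−1)/K) if K > 0) which integrates to 1, i.e. ∫ₐᵇ h(x) dx = 1. Then: if K ≥ 0, sup_{x ∈ (a,b)} h(x) ≤ N/(b−a); and if K < 0, sup_{x ∈ (a,b)} h(x) ≤ (1/(b−a)) · ( ∫₀¹ ( s_{K/(N−1)}(t(b−a)) / s_{K/(N−1)}(b−a) )^{N−1} dt )^{−1}. -/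
open MeasureTheory Filter

noncomputable section

/-- The comparison function `s_κ(θ)`:
`sin(√κ·θ)/√κ` if `κ > 0`, `θ` if `κ = 0`, `sinh(√(−κ)·θ)/√(−κ)` if `κ < 0`. -/
def sK (κ θ : ℝ) : ℝ :=
  if 0 < κ then Real.sin (Real.sqrt κ * θ) / Real.sqrt κ
  else if κ = 0 then θ
  else Real.sinh (Real.sqrt (-κ) * θ) / Real.sqrt (-κ)

/-- `h` is an `MCP(K,N)`-density on the interval `I ⊆ ℝ`: it is a nonnegative Borel
function satisfying
`h(t·x₁+(1−t)·x₀) ≥ (s_{K/(N−1)}((1−t)|x₁−x₀|)/s_{K/(N−1)}(|x₁−x₀|))^{N−1}·h(x₀)`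
for all `x₀, x₁ ∈ I`, `t ∈ [0,1]`; when `x₀ = x₁` the coefficient is interpreted as `1−t`,
and when `K > 0` and `|x₁−x₀| ≥ π√((N−1)/K)` the coefficient is `+∞`, forcing `h x₀ = 0`. -/
def IsMCPDensity (K N : ℝ) (I : Set ℝ) (h : ℝ → ℝ) : Prop :=
  Measurable h ∧ (∀ x ∈ I, 0 ≤ h x) ∧
  ∀ x₀ ∈ I, ∀ x₁ ∈ I, ∀ t ∈ Set.Icc (0:ℝ) 1,
    (x₀ = x₁ → (1 - t) * h x₀ ≤ h x₀) ∧
    (x₀ ≠ x₁ →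
      ((0 < K ∧ Real.pi * Real.sqrt ((N - 1) / K) ≤ |x₁ - x₀|) → h x₀ = 0) ∧
      (¬(0 < K ∧ Real.pi * Real.sqrt ((N - 1) / K) ≤ |x₁ - x₀|) →
        (sK (K / (N - 1)) ((1 - t) * |x₁ - x₀|) / sK (K / (N - 1)) |x₁ - x₀|) ^ (N - 1) * h x₀
          ≤ h (t * x₁ + (1 - t) * x₀)))

section AuxMCP

open Real Set



lemma aux_g {t : ℝ} (ht0 : 0 ≤ t) (ht1 : t ≤ 1) {u : ℝ} (hu : 0 ≤ u) :
    t * Real.cosh (t * u) * Real.sinh u ≤ Real.sinh (t * u) * Real.cosh u := by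
  set F : ℝ → ℝ := fun x => Real.sinh (t * x) * Real.cosh x - t * Real.cosh (t * x) * Real.sinh x
    with hF
  have hder : ∀ x : ℝ, HasDerivAt F ((1 - t ^ 2) * (Real.sinh (t * x) * Real.sinh x)) x := by
    intro x
    have h1 : HasDerivAt (fun x : ℝ => Real.sinh (t * x)) (t * Real.cosh (t * x)) x := by
      simpa [mul_comm, Function.comp_def] using (Real.hasDerivAt_sinh (t * x)).comp x ((hasDerivAt_id x).const_mul t)
    have h2 : HasDerivAt (fun x : ℝ => Real.cosh (t * x)) (t * Real.sinh (t * x)) x := by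
      simpa [mul_comm, Function.comp_def] using (Real.hasDerivAt_cosh (t * x)).comp x ((hasDerivAt_id x).const_mul t)
    have H := (h1.mul (Real.hasDerivAt_cosh x)).sub
      (((h2.mul (Real.hasDerivAt_sinh x))).const_mul t)
    have heq : F = fun x => Real.sinh (t * x) * Real.cosh x - t * (Real.cosh (t * x) * Real.sinh x) := by
      funext y; simp only [hF]; ring
    rw [heq]
    exact H.congr_deriv (by ring)
  have hmono : MonotoneOn F (Set.Ici (0:ℝ)) := by
    apply monotoneOn_of_deriv_nonneg (convex_Ici 0)
    · exact (fun x _ => (hder x).differentiableAt.continuousAt.continuousWithinAt)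
    · exact fun x hx => ((hder x).differentiableAt.differentiableWithinAt)
    · intro x hx
      rw [interior_Ici] at hx
      rw [(hder x).deriv]
      have h1 : 0 ≤ Real.sinh (t * x) := Real.sinh_nonneg_iff.2 (mul_nonneg ht0 (le_of_lt hx))
      have h2 : 0 ≤ Real.sinh x := Real.sinh_nonneg_iff.2 (le_of_lt hx)
      have h3 : (0:ℝ) ≤ 1 - t ^ 2 := by nlinarith
      exact mul_nonneg h3 (mul_nonneg h1 h2)
  have h0 : F 0 = 0 := by simp [hF]
  have := hmono (Set.self_mem_Ici) hu hu
  rw [h0] at this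
  simp only [hF] at this
  linarith

lemma aux_sinh_ratio {t u U : ℝ} (ht0 : 0 ≤ t) (ht1 : t ≤ 1) (hu : 0 < u) (huU : u ≤ U) :
    Real.sinh (t * U) / Real.sinh U ≤ Real.sinh (t * u) / Real.sinh u := by
  have hU : 0 < U := lt_of_lt_of_le hu huU
  have hanti : AntitoneOn (fun u => Real.sinh (t * u) / Real.sinh u) (Set.Ioi (0:ℝ)) := by
    have hder : ∀ x : ℝ, 0 < x → HasDerivAt (fun u => Real.sinh (t * u) / Real.sinh u)
        ((t * Real.cosh (t * x) * Real.sinh x - Real.sinh (t * x) * Real.cosh x) /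
          (Real.sinh x) ^ 2) x := by
      intro x hx
      have hs : Real.sinh x ≠ 0 := ne_of_gt (Real.sinh_pos_iff.2 hx)
      have h1 : HasDerivAt (fun u : ℝ => Real.sinh (t * u)) (t * Real.cosh (t * x)) x := by
        simpa [mul_comm, Function.comp_def] using
          (Real.hasDerivAt_sinh (t * x)).comp x ((hasDerivAt_id x).const_mul t)
      exact h1.div (Real.hasDerivAt_sinh x) hs
    apply antitoneOn_of_deriv_nonpos (convex_Ioi 0)
    · exact fun x hx => ((hder x hx).differentiableAt.continuousAt.continuousWithinAt)
    · intro x hx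
      rw [interior_Ioi] at hx
      exact (hder x hx).differentiableAt.differentiableWithinAt
    · intro x hx
      rw [interior_Ioi] at hx
      rw [(hder x hx).deriv]
      apply div_nonpos_of_nonpos_of_nonneg
      · have := aux_g ht0 ht1 (le_of_lt hx)
        linarith
      · positivity
  exact hanti (Set.mem_Ioi.2 hu) (Set.mem_Ioi.2 hU) huU





lemma aux_sK_cont (κ : ℝ) : Continuous (sK κ) := by
  unfold sK
  rcases lt_trichotomy 0 κ with h | h | h
  · simp only [if_pos h]
    fun_prop
  · simp only [if_neg (show ¬ 0 < κ by simp [← h]), if_pos h.symm]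
    fun_prop
  · simp only [if_neg (show ¬ 0 < κ by linarith), if_neg (show ¬ κ = 0 by linarith)]
    fun_prop

lemma aux_sK_nonneg (κ : ℝ) {θ : ℝ} (hθ : 0 ≤ θ) (hπ : 0 < κ → Real.sqrt κ * θ ≤ π) :
    0 ≤ sK κ θ := by
  unfold sK
  rcases lt_trichotomy 0 κ with h | h | h
  · rw [if_pos h]
    exact div_nonneg (Real.sin_nonneg_of_nonneg_of_le_pi
      (mul_nonneg (Real.sqrt_nonneg κ) hθ) (hπ h)) (Real.sqrt_nonneg κ)
  · simp only [if_neg (show ¬ 0 < κ by simp [← h]), if_pos h.symm]; exact hθ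
  · simp only [if_neg (show ¬ 0 < κ by linarith), if_neg (show ¬ κ = 0 by linarith)]
    exact div_nonneg (Real.sinh_nonneg_iff.2 (mul_nonneg (Real.sqrt_nonneg _) hθ))
      (Real.sqrt_nonneg _)

lemma aux_sK_pos (κ : ℝ) {θ : ℝ} (hθ : 0 < θ) (hπ : 0 < κ → Real.sqrt κ * θ < π) :
    0 < sK κ θ := by
  unfold sK
  rcases lt_trichotomy 0 κ with h | h | h
  · rw [if_pos h]
    exact div_pos (Real.sin_pos_of_pos_of_lt_pi
      (mul_pos (Real.sqrt_pos.2 h) hθ) (hπ h)) (Real.sqrt_pos.2 h)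
  · simp only [if_neg (show ¬ 0 < κ by simp [← h]), if_pos h.symm]; exact hθ
  · simp only [if_neg (show ¬ 0 < κ by linarith), if_neg (show ¬ κ = 0 by linarith)]
    have h1 : 0 < Real.sqrt (-κ) := Real.sqrt_pos.2 (by linarith)
    exact div_pos (Real.sinh_pos_iff.2 (mul_pos h1 hθ)) h1

lemma aux_sin_concave {s x : ℝ} (hs0 : 0 ≤ s) (hs1 : s ≤ 1) (hx0 : 0 ≤ x) (hxπ : x ≤ π) :
    s * Real.sin x ≤ Real.sin (s * x) := by
  have := strictConcaveOn_sin_Icc.concaveOn.2 (x := x) (y := 0)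
    ⟨hx0, hxπ⟩ ⟨le_refl 0, Real.pi_pos.le⟩ hs0 (by linarith : (0:ℝ) ≤ 1 - s) (by ring)
  simpa using this

lemma aux_sK_lb_nonneg {κ : ℝ} (hκ : 0 ≤ κ) {d s : ℝ} (hd : 0 ≤ d)
    (hπ : Real.sqrt κ * d ≤ π) (hs0 : 0 ≤ s) (hs1 : s ≤ 1) :
    s * sK κ d ≤ sK κ (s * d) := by
  rcases eq_or_lt_of_le hκ with h | h
  · simp only [sK, if_neg (show ¬ 0 < κ by simp [← h]), if_pos h.symm, le_refl]
  · simp only [sK, if_pos h]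
    have hsq : 0 < Real.sqrt κ := Real.sqrt_pos.2 h
    have h2 : s * Real.sin (Real.sqrt κ * d) ≤ Real.sin (Real.sqrt κ * (s * d)) := by
      calc s * Real.sin (Real.sqrt κ * d) ≤ Real.sin (s * (Real.sqrt κ * d)) :=
            aux_sin_concave hs0 hs1 (mul_nonneg (Real.sqrt_nonneg κ) hd) hπ
        _ = Real.sin (Real.sqrt κ * (s * d)) := by ring_nf
    calc s * (Real.sin (Real.sqrt κ * d) / Real.sqrt κ)
        = (s * Real.sin (Real.sqrt κ * d)) / Real.sqrt κ := by ring
      _ ≤ Real.sin (Real.sqrt κ * (s * d)) / Real.sqrt κ := by gcongr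


lemma aux_sK_ratio_neg {κ : ℝ} (hκ : κ < 0) {t d D : ℝ} (ht0 : 0 ≤ t) (ht1 : t ≤ 1)
    (hd : 0 < d) (hdD : d ≤ D) :
    sK κ (t * D) / sK κ D ≤ sK κ (t * d) / sK κ d := by
  simp only [sK, if_neg (show ¬ 0 < κ by linarith), if_neg (show ¬ κ = 0 by linarith)]
  have hc : 0 < Real.sqrt (-κ) := Real.sqrt_pos.2 (by linarith)
  have e1 : ∀ x : ℝ, 0 < x → Real.sinh (Real.sqrt (-κ) * (t * x)) / Real.sqrt (-κ) /
      (Real.sinh (Real.sqrt (-κ) * x) / Real.sqrt (-κ))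
      = Real.sinh (t * (Real.sqrt (-κ) * x)) / Real.sinh (Real.sqrt (-κ) * x) := by
    intro x hx
    have hB : Real.sinh (Real.sqrt (-κ) * x) ≠ 0 :=
      ne_of_gt (Real.sinh_pos_iff.2 (mul_pos hc hx))
    field_simp
  rw [e1 D (lt_of_lt_of_le hd hdD), e1 d hd]
  exact aux_sinh_ratio ht0 ht1 (mul_pos hc hd) (by gcongr)




lemma aux_subst (f : ℝ → ℝ) {c : ℝ} (hc : c ≠ 0) (x₀ : ℝ) :
    ∫ y in x₀..(x₀ + c), f ((y - x₀) / c) = c * ∫ t in (0:ℝ)..1, f t := by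
  have h1 := intervalIntegral.integral_comp_sub_right (a := x₀) (b := x₀ + c)
    (fun u => f (u / c)) x₀
  simp only [sub_self, add_sub_cancel_left] at h1
  rw [h1, intervalIntegral.integral_comp_div (f := f) hc]
  simp [div_self hc]

lemma aux_flip (f : ℝ → ℝ) : ∫ t in (0:ℝ)..1, f (1 - t) = ∫ t in (0:ℝ)..1, f t := by
  have := intervalIntegral.integral_comp_sub_left (a := (0:ℝ)) (b := 1) f 1
  simpa using this

lemma aux_int_rpow {N : ℝ} (hN : 1 < N) : ∫ t in (0:ℝ)..1, t ^ (N - 1) = 1 / N := by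
  rw [integral_rpow (Or.inl (by linarith))]
  rw [Real.one_rpow, Real.zero_rpow (show N - 1 + 1 ≠ 0 by intro h; linarith)]
  rw [show N - 1 + 1 = N by ring]
  norm_num



lemma aux_cont1 (κ d : ℝ) {N : ℝ} (hN : 0 ≤ N - 1) :
    Continuous (fun t : ℝ => (sK κ (t * d) / sK κ d) ^ (N - 1)) :=
  (Real.continuous_rpow_const hN).comp
    (((aux_sK_cont κ).comp (continuous_id.mul continuous_const)).div_const _)

lemma aux_cont2 (κ d x₀ c r : ℝ) {N : ℝ} (hN : 0 ≤ N - 1) :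
    Continuous (fun y : ℝ => (sK κ ((1 - (y - x₀) / c) * d) / sK κ d) ^ (N - 1) * r) :=
  (((Real.continuous_rpow_const hN).comp
    (((aux_sK_cont κ).comp (by fun_prop)).div_const _))).mul continuous_const

lemma aux_Ilb_nonneg {K N d : ℝ} (hK : 0 ≤ K) (hN : 1 < N) (hd : 0 < d)
    (hπs : 0 < K → Real.sqrt (K / (N - 1)) * d < π) :
    1 / N ≤ ∫ t in (0:ℝ)..1, (sK (K / (N - 1)) (t * d) / sK (K / (N - 1)) d) ^ (N - 1) := by
  have hN0 : (0:ℝ) < N - 1 := by linarith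
  have hκ : 0 ≤ K / (N - 1) := div_nonneg hK hN0.le
  have hπ : Real.sqrt (K / (N - 1)) * d ≤ π := by
    rcases eq_or_lt_of_le hK with h | h
    · rw [← h]; norm_num [Real.pi_pos.le]
    · exact (hπs h).le
  have hκπ0 : 0 < K / (N - 1) → Real.sqrt (K / (N - 1)) * d < π := by
    intro hκp
    apply hπs
    have h1 := mul_pos hκp hN0
    rwa [div_mul_cancel₀ _ (ne_of_gt hN0)] at h1
  have hsKd : 0 < sK (K / (N - 1)) d := aux_sK_pos _ hd hκπ0
  rw [← aux_int_rpow hN]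
  apply intervalIntegral.integral_mono_on (by norm_num)
    ((Real.continuous_rpow_const (by linarith)).intervalIntegrable 0 1)
    ((aux_cont1 _ d (by linarith)).intervalIntegrable 0 1)
  rintro t ⟨ht0, ht1⟩
  have h1 : t * sK (K / (N - 1)) d ≤ sK (K / (N - 1)) (t * d) :=
    aux_sK_lb_nonneg hκ hd.le hπ ht0 ht1
  have h2 : t ≤ sK (K / (N - 1)) (t * d) / sK (K / (N - 1)) d := (le_div_iff₀ hsKd).2 h1
  exact Real.rpow_le_rpow ht0 h2 (by linarith)

lemma aux_Ilb_neg {K N d D : ℝ} (hK : K < 0) (hN : 1 < N) (hd : 0 < d) (hdD : d ≤ D) :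
    (∫ t in (0:ℝ)..1, (sK (K / (N - 1)) (t * D) / sK (K / (N - 1)) D) ^ (N - 1))
      ≤ ∫ t in (0:ℝ)..1, (sK (K / (N - 1)) (t * d) / sK (K / (N - 1)) d) ^ (N - 1) := by
  have hN0 : (0:ℝ) < N - 1 := by linarith
  have hκ : K / (N - 1) < 0 := div_neg_of_neg_of_pos hK hN0
  have hD : 0 < D := lt_of_lt_of_le hd hdD
  apply intervalIntegral.integral_mono_on (by norm_num)
    ((aux_cont1 _ D (by linarith)).intervalIntegrable 0 1)
    ((aux_cont1 _ d (by linarith)).intervalIntegrable 0 1)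
  rintro t ⟨ht0, ht1⟩
  have hb0 : 0 ≤ sK (K / (N - 1)) (t * D) / sK (K / (N - 1)) D :=
    div_nonneg
      (aux_sK_nonneg _ (mul_nonneg ht0 hD.le) (fun hp => absurd hp (not_lt.2 hκ.le)))
      (aux_sK_nonneg _ hD.le (fun hp => absurd hp (not_lt.2 hκ.le)))
  exact Real.rpow_le_rpow hb0 (aux_sK_ratio_neg hκ ht0 ht1 hd hdD) (by linarith)

lemma aux_Jpos {K N D : ℝ} (hK : K < 0) (hN : 1 < N) (hD : 0 < D) :
    0 < ∫ t in (0:ℝ)..1, (sK (K / (N - 1)) (t * D) / sK (K / (N - 1)) D) ^ (N - 1) := by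
  have hN0 : (0:ℝ) < N - 1 := by linarith
  have hκ : K / (N - 1) < 0 := div_neg_of_neg_of_pos hK hN0
  apply intervalIntegral.intervalIntegral_pos_of_pos_on ((aux_cont1 _ D (by linarith)).intervalIntegrable 0 1)
    _ one_pos
  rintro t ⟨ht0, ht1⟩
  have h1 : 0 < sK (K / (N - 1)) (t * D) :=
    aux_sK_pos _ (mul_pos ht0 hD) (fun hp => absurd hp (not_lt.2 hκ.le))
  have h2 : 0 < sK (K / (N - 1)) D :=
    aux_sK_pos _ hD (fun hp => absurd hp (not_lt.2 hκ.le))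
  exact Real.rpow_pos_of_pos (div_pos h1 h2) _

end AuxMCP

lemma aux_seg (K N a b : ℝ) (hN : 1 < N) (hab : a < b)
    (hDK : 0 < K → b - a ≤ Real.pi * Real.sqrt ((N - 1) / K))
    (h : ℝ → ℝ) (hInt : MeasureTheory.IntegrableOn h (Set.Ioc a b))
    (hineq : ∀ x₀ ∈ Set.Ioo a b, ∀ x₁ ∈ Set.Ioo a b, ∀ t ∈ Set.Icc (0:ℝ) 1,
      (x₀ = x₁ → (1 - t) * h x₀ ≤ h x₀) ∧
      (x₀ ≠ x₁ →
        ((0 < K ∧ Real.pi * Real.sqrt ((N - 1) / K) ≤ |x₁ - x₀|) → h x₀ = 0) ∧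
        (¬(0 < K ∧ Real.pi * Real.sqrt ((N - 1) / K) ≤ |x₁ - x₀|) →
          (sK (K / (N - 1)) ((1 - t) * |x₁ - x₀|) / sK (K / (N - 1)) |x₁ - x₀|) ^ (N - 1) * h x₀
            ≤ h (t * x₁ + (1 - t) * x₀))))
    (x₀ : ℝ) (hx₀ : x₀ ∈ Set.Ioo a b) (x₁ : ℝ) (hx₁ : x₁ ∈ Set.Ioo a b) (hne : x₁ ≠ x₀) :
    |x₁ - x₀| * (h x₀ * ∫ t in (0:ℝ)..1,
        (sK (K / (N - 1)) (t * |x₁ - x₀|) / sK (K / (N - 1)) |x₁ - x₀|) ^ (N - 1))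
      ≤ ∫ y in (min x₀ x₁)..(max x₀ x₁), h y := by
  have hN0 : (0:ℝ) < N - 1 := by linarith
  have hc : x₁ - x₀ ≠ 0 := sub_ne_zero.2 hne
  have hd0 : 0 < |x₁ - x₀| := abs_pos.2 hc
  have habs_lt : |x₁ - x₀| < b - a :=
    abs_sub_lt_iff.2 ⟨by linarith [hx₁.2, hx₀.1], by linarith [hx₀.2, hx₁.1]⟩
  have hside : ¬(0 < K ∧ Real.pi * Real.sqrt ((N - 1) / K) ≤ |x₁ - x₀|) := by
    rintro ⟨hK, hle⟩
    have h1 := hDK hK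
    linarith
  have hpt : ∀ y ∈ Set.uIcc x₀ x₁,
      (sK (K / (N - 1)) ((1 - (y - x₀) / (x₁ - x₀)) * |x₁ - x₀|) /
        sK (K / (N - 1)) |x₁ - x₀|) ^ (N - 1) * h x₀ ≤ h y := by
    intro y hy
    have hyb : ((y - x₀) / (x₁ - x₀)) * (x₁ - x₀) = y - x₀ := div_mul_cancel₀ _ hc
    have hmem : (y - x₀) / (x₁ - x₀) ∈ Set.Icc (0:ℝ) 1 := by
      rcases lt_or_gt_of_ne (hc : x₁ - x₀ ≠ 0) with hcs | hcs
      · have hx10 : x₁ ≤ x₀ := by linarith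
        rw [Set.uIcc_of_ge hx10] at hy
        obtain ⟨hy1, hy2⟩ := hy
        constructor
        · nlinarith [hyb]
        · nlinarith [hyb]
      · have hx01 : x₀ ≤ x₁ := by linarith
        rw [Set.uIcc_of_le hx01] at hy
        obtain ⟨hy1, hy2⟩ := hy
        constructor
        · exact div_nonneg (by linarith) (by linarith)
        · rw [div_le_one (by linarith)]; linarith
    have h2 := ((hineq x₀ hx₀ x₁ hx₁ _ hmem).2 (fun e => hne e.symm)).2 hside
    have hyeq : ((y - x₀) / (x₁ - x₀)) * x₁ + (1 - (y - x₀) / (x₁ - x₀)) * x₀ = y := by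
      linear_combination hyb
    rw [hyeq] at h2
    exact h2
  have hsub := aux_subst (fun t => (sK (K / (N - 1)) ((1 - t) * |x₁ - x₀|) /
    sK (K / (N - 1)) |x₁ - x₀|) ^ (N - 1) * h x₀) hc x₀
  rw [show x₀ + (x₁ - x₀) = x₁ by ring] at hsub
  have hflip : (∫ t in (0:ℝ)..1, (sK (K / (N - 1)) ((1 - t) * |x₁ - x₀|) /
        sK (K / (N - 1)) |x₁ - x₀|) ^ (N - 1) * h x₀)
      = (∫ t in (0:ℝ)..1, (sK (K / (N - 1)) (t * |x₁ - x₀|) /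
        sK (K / (N - 1)) |x₁ - x₀|) ^ (N - 1)) * h x₀ := by
    calc (∫ t in (0:ℝ)..1, (sK (K / (N - 1)) ((1 - t) * |x₁ - x₀|) /
          sK (K / (N - 1)) |x₁ - x₀|) ^ (N - 1) * h x₀)
        = ∫ t in (0:ℝ)..1, (sK (K / (N - 1)) (t * |x₁ - x₀|) /
          sK (K / (N - 1)) |x₁ - x₀|) ^ (N - 1) * h x₀ :=
        aux_flip (fun t => (sK (K / (N - 1)) (t * |x₁ - x₀|) /
          sK (K / (N - 1)) |x₁ - x₀|) ^ (N - 1) * h x₀)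
      _ = _ := intervalIntegral.integral_mul_const _ _
  have hsubIcc : Set.uIcc x₀ x₁ ⊆ Set.Ioc a b := by
    rw [Set.uIcc]
    exact fun y hy => ⟨lt_of_lt_of_le (lt_min hx₀.1 hx₁.1) hy.1,
      le_trans hy.2 (le_of_lt (max_lt hx₀.2 hx₁.2))⟩
  have hhint : IntervalIntegrable h MeasureTheory.volume x₀ x₁ := by
    rw [intervalIntegrable_iff]
    exact hInt.mono_set (le_trans Set.uIoc_subset_uIcc hsubIcc)
  have hφint : IntervalIntegrable (fun y : ℝ =>
      (sK (K / (N - 1)) ((1 - (y - x₀) / (x₁ - x₀)) * |x₁ - x₀|) /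
        sK (K / (N - 1)) |x₁ - x₀|) ^ (N - 1) * h x₀) MeasureTheory.volume x₀ x₁ :=
    (aux_cont2 _ _ _ _ _ (by linarith)).intervalIntegrable x₀ x₁
  rcases lt_or_gt_of_ne hc with hcs | hcs
  · -- x₁ < x₀
    have hx10 : x₁ ≤ x₀ := by linarith
    rw [min_eq_right hx10, max_eq_left hx10]
    have habs : |x₁ - x₀| = x₀ - x₁ := by rw [abs_of_neg hcs, neg_sub]
    have hmono := intervalIntegral.integral_mono_on hx10 hφint.symm hhint.symm
      (fun y hy => hpt y (by rw [Set.uIcc_of_ge hx10]; exact hy))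
    have hs : (∫ y in x₁..x₀,
        (sK (K / (N - 1)) ((1 - (y - x₀) / (x₁ - x₀)) * |x₁ - x₀|) /
          sK (K / (N - 1)) |x₁ - x₀|) ^ (N - 1) * h x₀)
        = (x₀ - x₁) * ((∫ t in (0:ℝ)..1, (sK (K / (N - 1)) (t * |x₁ - x₀|) /
          sK (K / (N - 1)) |x₁ - x₀|) ^ (N - 1)) * h x₀) := by
      rw [intervalIntegral.integral_symm x₁ x₀] at hsub
      linear_combination (-1 : ℝ) * hsub + (x₀ - x₁) * hflip
    calc |x₁ - x₀| * (h x₀ * ∫ t in (0:ℝ)..1, (sK (K / (N - 1)) (t * |x₁ - x₀|) /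
          sK (K / (N - 1)) |x₁ - x₀|) ^ (N - 1))
        = (x₀ - x₁) * ((∫ t in (0:ℝ)..1, (sK (K / (N - 1)) (t * |x₁ - x₀|) /
          sK (K / (N - 1)) |x₁ - x₀|) ^ (N - 1)) * h x₀) := by rw [habs]; ring
      _ = _ := hs.symm
      _ ≤ ∫ y in x₁..x₀, h y := hmono
  · -- x₀ < x₁
    have hx01 : x₀ ≤ x₁ := by linarith
    rw [min_eq_left hx01, max_eq_right hx01]
    have habs : |x₁ - x₀| = x₁ - x₀ := abs_of_pos hcs
    have hmono := intervalIntegral.integral_mono_on hx01 hφint hhint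
      (fun y hy => hpt y (by rw [Set.uIcc_of_le hx01]; exact hy))
    have hs : (∫ y in x₀..x₁,
        (sK (K / (N - 1)) ((1 - (y - x₀) / (x₁ - x₀)) * |x₁ - x₀|) /
          sK (K / (N - 1)) |x₁ - x₀|) ^ (N - 1) * h x₀)
        = (x₁ - x₀) * ((∫ t in (0:ℝ)..1, (sK (K / (N - 1)) (t * |x₁ - x₀|) /
          sK (K / (N - 1)) |x₁ - x₀|) ^ (N - 1)) * h x₀) := by
      linear_combination hsub + (x₁ - x₀) * hflip
    calc |x₁ - x₀| * (h x₀ * ∫ t in (0:ℝ)..1, (sK (K / (N - 1)) (t * |x₁ - x₀|) /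
          sK (K / (N - 1)) |x₁ - x₀|) ^ (N - 1))
        = (x₁ - x₀) * ((∫ t in (0:ℝ)..1, (sK (K / (N - 1)) (t * |x₁ - x₀|) /
          sK (K / (N - 1)) |x₁ - x₀|) ^ (N - 1)) * h x₀) := by rw [habs]; ring
      _ = _ := hs.symm
      _ ≤ ∫ y in x₀..x₁, h y := hmono



lemma aux_sqrt_pi {K N a b : ℝ} (hN : 1 < N)
    (hDK : 0 < K → b - a ≤ Real.pi * Real.sqrt ((N - 1) / K)) (hKp : 0 < K) :
    Real.sqrt (K / (N - 1)) * (b - a) ≤ Real.pi := by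
  have hN0 : (0:ℝ) < N - 1 := by linarith
  have hκp : 0 < K / (N - 1) := div_pos hKp hN0
  have hK0 : K ≠ 0 := ne_of_gt hKp
  have hN1 : N - 1 ≠ 0 := ne_of_gt hN0
  have h1 : Real.sqrt (K / (N - 1)) * Real.sqrt ((N - 1) / K) = 1 := by
    rw [← Real.sqrt_mul hκp.le, show K / (N - 1) * ((N - 1) / K) = 1 by field_simp]
    exact Real.sqrt_one
  have h2 := hDK hKp
  calc Real.sqrt (K / (N - 1)) * (b - a)
      ≤ Real.sqrt (K / (N - 1)) * (Real.pi * Real.sqrt ((N - 1) / K)) :=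
        mul_le_mul_of_nonneg_left h2 (Real.sqrt_nonneg _)
    _ = Real.pi * (Real.sqrt (K / (N - 1)) * Real.sqrt ((N - 1) / K)) := by ring
    _ = Real.pi := by rw [h1, mul_one]


/-- `h` is a `CD(K,N)`-density on the interval `I ⊆ ℝ`. -/
def IsCDDensity (K N : ℝ) (I : Set ℝ) (h : ℝ → ℝ) : Prop :=
  (∀ x ∈ I, 0 ≤ h x) ∧
  ∀ x₀ ∈ I, ∀ x₁ ∈ I, x₀ < x₁ → ∀ t ∈ Set.Icc (0:ℝ) 1,
    (sK (K / (N - 1)) ((1 - t) * (x₁ - x₀)) / sK (K / (N - 1)) (x₁ - x₀)) * h x₀ ^ (1 / (N - 1))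
      + (sK (K / (N - 1)) (t * (x₁ - x₀)) / sK (K / (N - 1)) (x₁ - x₀)) * h x₁ ^ (1 / (N - 1))
      ≤ h ((1 - t) * x₀ + t * x₁) ^ (1 / (N - 1))

/-- The lower-bound function `f_{K,N,D}`. -/
def fKND (K N D : ℝ) (x : ℝ) : ℝ :=
  if x = 0 ∨ x = D then 0
  else ((∫ y in (0:ℝ)..x, (sK (K / (N - 1)) (D - y) / sK (K / (N - 1)) (D - x)) ^ (N - 1)) +
        (∫ y in x..D, (sK (K / (N - 1)) y / sK (K / (N - 1)) x) ^ (N - 1)))⁻¹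

/-- The model density `h^a_{K,N,D}`. -/
def hKND (K N D a : ℝ) (x : ℝ) : ℝ :=
  if x ≤ a then fKND K N D a * (sK (K / (N - 1)) (D - x) / sK (K / (N - 1)) (D - a)) ^ (N - 1)
  else fKND K N D a * (sK (K / (N - 1)) x / sK (K / (N - 1)) a) ^ (N - 1)

/-- `v_{K,N,D}(a) = ∫₀ᵃ h^a_{K,N,D}(x) dx`. -/
def vKND (K N D a : ℝ) : ℝ := ∫ x in (0:ℝ)..a, hKND K N D a x

/-- The (outer) Minkowski content of `A` with respect to `μ`:
`liminf_{ε→0⁺} (μ(Aᵉ) − μ(A))/ε` where `Aᵉ` is the open `ε`-neighbourhood of `A`. -/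
def mink (μ : Measure ℝ) (A : Set ℝ) : ℝ :=
  Filter.liminf (fun ε : ℝ => ((μ (Metric.thickening ε A)).toReal - (μ A).toReal) / ε)
    (nhdsWithin 0 (Set.Ioi 0))

/-- The measure `μ_h = h · Leb` restricted to `[0,D]`. -/
def muh (h : ℝ → ℝ) (D : ℝ) : Measure ℝ :=
  (volume.restrict (Set.Icc (0:ℝ) D)).withDensity (fun x => ENNReal.ofReal (h x))

/-- The restricted one-dimensional isoperimetric profile `Ĩ_{K,N,D}(v)` over
`MCP(K,N)`-densities on `[0,D]` integrating to `1`. -/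
def Itilde (K N D v : ℝ) : ℝ :=
  sInf { p : ℝ | ∃ h : ℝ → ℝ, IsMCPDensity K N (Set.Icc 0 D) h ∧
    (∫ x in (0:ℝ)..D, h x) = 1 ∧
    ∃ A : Set ℝ, MeasurableSet A ∧ A ⊆ Set.Icc 0 D ∧ (muh h D A).toReal = v ∧
      p = mink (muh h D) A }

/-- The restricted one-dimensional isoperimetric profile `Ĩ^{CD}_{K,N,D}(v)` over
`CD(K,N)`-densities on `[0,D]` integrating to `1`. -/
def ItildeCD (K N D v : ℝ) : ℝ :=
  sInf { p : ℝ | ∃ h : ℝ → ℝ, IsCDDensity K N (Set.Icc 0 D) h ∧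
    (∫ x in (0:ℝ)..D, h x) = 1 ∧
    ∃ A : Set ℝ, MeasurableSet A ∧ A ⊆ Set.Icc 0 D ∧ (muh h D A).toReal = v ∧
      p = mink (muh h D) A }


/-- Lemma A.8 (apriori sup-bound for an `MCP(K,N)`-density on `(a,b)` integrating to 1). -/
theorem sup_bound_of_mcp_density (K N a b : ℝ) (hN : 1 < N) (hab : a < b)
    (hDK : 0 < K → b - a ≤ Real.pi * Real.sqrt ((N - 1) / K))
    (h : ℝ → ℝ) (hMCP : IsMCPDensity K N (Set.Ioo a b) h)
    (hint : (∫ x in a..b, h x) = 1) :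
    (0 ≤ K → ∀ x ∈ Set.Ioo a b, h x ≤ N / (b - a)) ∧
    (K < 0 → ∀ x ∈ Set.Ioo a b,
      h x ≤ (1 / (b - a)) *
        (∫ t in (0:ℝ)..1,
          (sK (K / (N - 1)) (t * (b - a)) / sK (K / (N - 1)) (b - a)) ^ (N - 1))⁻¹) := by
  obtain ⟨hmeas, hpos, hineq⟩ := hMCP
  have hN0 : (0:ℝ) < N - 1 := by linarith
  have hD : (0:ℝ) < b - a := by linarith
  have hInt : MeasureTheory.IntegrableOn h (Set.Ioc a b) := by
    by_contra hcon
    rw [intervalIntegral.integral_of_le hab.le, MeasureTheory.integral_undef hcon] at hint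
    norm_num at hint
  have hIoo : MeasureTheory.IntegrableOn h (Set.Ioo a b) := hInt.mono_set Set.Ioo_subset_Ioc_self
  have hsub1 : ∀ p q : ℝ, a < p → p ≤ q → q < b → (∫ y in p..q, h y) ≤ 1 := by
    intro p q hp hpq hq
    rw [intervalIntegral.integral_of_le hpq]
    have h1 : ∫ y in Set.Ioc p q, h y ≤ ∫ y in Set.Ioo a b, h y := by
      apply MeasureTheory.setIntegral_mono_set hIoo
      · exact (MeasureTheory.ae_restrict_iff' measurableSet_Ioo).2
          (Filter.Eventually.of_forall (fun x hx => hpos x hx))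
      · exact HasSubset.Subset.eventuallyLE
          (fun y hy => ⟨lt_of_lt_of_le hp (le_of_lt hy.1), lt_of_le_of_lt hy.2 hq⟩)
    have h2 : ∫ y in Set.Ioo a b, h y = 1 := by
      rw [← MeasureTheory.integral_Ioc_eq_integral_Ioo,
        ← intervalIntegral.integral_of_le hab.le]
      exact hint
    linarith
  have key : ∀ x₀ ∈ Set.Ioo a b, ∀ c₀ : ℝ, 0 ≤ c₀ →
      (∀ d : ℝ, 0 < d → d < b - a → c₀ ≤ ∫ t in (0:ℝ)..1,
        (sK (K / (N - 1)) (t * d) / sK (K / (N - 1)) d) ^ (N - 1)) →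
      h x₀ * c₀ * (b - a) ≤ 1 := by
    intro x₀ hx₀ c₀ hc₀ hIlb
    obtain ⟨hax₀, hx₀b⟩ := hx₀
    have hx₀' : x₀ ∈ Set.Ioo a b := ⟨hax₀, hx₀b⟩
    have hε : ∀ ε : ℝ, 0 < ε → ε < min (x₀ - a) (b - x₀) →
        h x₀ * c₀ * (b - a - 2 * ε) ≤ 1 := by
      intro ε hε0 hεlt
      have hε1 : ε < x₀ - a := lt_of_lt_of_le hεlt (min_le_left _ _)
      have hε2 : ε < b - x₀ := lt_of_lt_of_le hεlt (min_le_right _ _)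
      have hp : a + ε ∈ Set.Ioo a b := ⟨by linarith, by linarith⟩
      have hq : b - ε ∈ Set.Ioo a b := ⟨by linarith, by linarith⟩
      have hs1 := aux_seg K N a b hN hab hDK h hInt hineq x₀ hx₀' (a + ε) hp
        (ne_of_lt (by linarith))
      have hs2 := aux_seg K N a b hN hab hDK h hInt hineq x₀ hx₀' (b - ε) hq
        (ne_of_gt (by linarith))
      rw [show |a + ε - x₀| = x₀ - (a + ε) by
        rw [abs_of_neg (by linarith : a + ε - x₀ < 0)]; ring] at hs1
      rw [min_eq_right (by linarith : a + ε ≤ x₀),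
        max_eq_left (by linarith : a + ε ≤ x₀)] at hs1
      rw [show |b - ε - x₀| = b - ε - x₀ from abs_of_pos (by linarith)] at hs2
      rw [min_eq_left (by linarith : x₀ ≤ b - ε),
        max_eq_right (by linarith : x₀ ≤ b - ε)] at hs2
      have hI1 := hIlb (x₀ - (a + ε)) (by linarith) (by linarith)
      have hI2 := hIlb (b - ε - x₀) (by linarith) (by linarith)
      have hb1 : (x₀ - (a + ε)) * (h x₀ * c₀) ≤ ∫ y in (a + ε)..x₀, h y :=
        le_trans (mul_le_mul_of_nonneg_left
          (mul_le_mul_of_nonneg_left hI1 (hpos x₀ hx₀')) (by linarith)) hs1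
      have hb2 : (b - ε - x₀) * (h x₀ * c₀) ≤ ∫ y in x₀..(b - ε), h y :=
        le_trans (mul_le_mul_of_nonneg_left
          (mul_le_mul_of_nonneg_left hI2 (hpos x₀ hx₀')) (by linarith)) hs2
      have hadd : (∫ y in (a + ε)..x₀, h y) + (∫ y in x₀..(b - ε), h y)
          = ∫ y in (a + ε)..(b - ε), h y := by
        apply intervalIntegral.integral_add_adjacent_intervals
        · rw [intervalIntegrable_iff]
          apply hInt.mono_set
          intro y hy
          rw [Set.uIoc_of_le (by linarith : a + ε ≤ x₀)] at hy
          exact ⟨by linarith [hy.1], by linarith [hy.2]⟩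
        · rw [intervalIntegrable_iff]
          apply hInt.mono_set
          intro y hy
          rw [Set.uIoc_of_le (by linarith : x₀ ≤ b - ε)] at hy
          exact ⟨by linarith [hy.1], by linarith [hy.2]⟩
      have hle1 := hsub1 (a + ε) (b - ε) (by linarith) (by linarith) (by linarith)
      have hring : h x₀ * c₀ * (b - a - 2 * ε)
          = (x₀ - (a + ε)) * (h x₀ * c₀) + (b - ε - x₀) * (h x₀ * c₀) := by ring
      linarith
    by_contra hcon
    push_neg at hcon
    have hM0 : 0 ≤ h x₀ * c₀ := mul_nonneg (hpos x₀ hx₀') hc₀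
    have hMpos : 0 < h x₀ * c₀ := by nlinarith
    have hδ : 0 < h x₀ * c₀ * (b - a) - 1 := by linarith
    have hε₀ : 0 < min (x₀ - a) (b - x₀) := lt_min (by linarith) (by linarith)
    set M := h x₀ * c₀ with hMdef
    set ε := min (min (x₀ - a) (b - x₀) / 2) ((M * (b - a) - 1) / (4 * M)) with hεdef
    have hεpos : 0 < ε := lt_min (by linarith) (by positivity)
    have hεlt : ε < min (x₀ - a) (b - x₀) :=
      lt_of_le_of_lt (min_le_left _ _) (by linarith)
    have h1 := hε ε hεpos hεlt
    have h2 : ε ≤ (M * (b - a) - 1) / (4 * M) := min_le_right _ _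
    have h3 : M * ε ≤ (M * (b - a) - 1) / 4 := by
      have h4 := mul_le_mul_of_nonneg_left h2 hM0
      rwa [show M * ((M * (b - a) - 1) / (4 * M)) = (M * (b - a) - 1) / 4 by
        field_simp] at h4
    nlinarith [h1, h3]
  constructor
  · intro hK x₀ hx₀
    have hIlb : ∀ d : ℝ, 0 < d → d < b - a → (1 / N : ℝ) ≤ ∫ t in (0:ℝ)..1,
        (sK (K / (N - 1)) (t * d) / sK (K / (N - 1)) d) ^ (N - 1) := by
      intro d hd hdlt
      apply aux_Ilb_nonneg hK hN hd
      intro hKpos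
      have hsqκ : 0 < Real.sqrt (K / (N - 1)) := Real.sqrt_pos.2 (div_pos hKpos hN0)
      calc Real.sqrt (K / (N - 1)) * d < Real.sqrt (K / (N - 1)) * (b - a) :=
            mul_lt_mul_of_pos_left hdlt hsqκ
        _ ≤ Real.pi := aux_sqrt_pi hN hDK hKpos
    have hNpos : (0:ℝ) < N := by linarith
    have hkey := key x₀ hx₀ (1 / N) (by positivity) hIlb
    rw [le_div_iff₀ hD]
    have h5 : h x₀ * (b - a) = h x₀ * (1 / N) * (b - a) * N := by field_simp
    rw [h5]
    have h6 := mul_le_mul_of_nonneg_right hkey hNpos.le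
    linarith
  · intro hK x₀ hx₀
    set J := ∫ t in (0:ℝ)..1,
      (sK (K / (N - 1)) (t * (b - a)) / sK (K / (N - 1)) (b - a)) ^ (N - 1) with hJdef
    have hJ : 0 < J := aux_Jpos hK hN hD
    have hIlb : ∀ d : ℝ, 0 < d → d < b - a → J ≤ ∫ t in (0:ℝ)..1,
        (sK (K / (N - 1)) (t * d) / sK (K / (N - 1)) d) ^ (N - 1) :=
      fun d hd hdlt => aux_Ilb_neg hK hN hd hdlt.le
    have hkey := key x₀ hx₀ J hJ.le hIlb
    have hbJ : 0 < (b - a) * J := mul_pos hD hJ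
    have h6 : h x₀ ≤ 1 / ((b - a) * J) := by
      rw [le_div_iff₀ hbJ]
      nlinarith [hkey]
    calc h x₀ ≤ 1 / ((b - a) * J) := h6
      _ = 1 / (b - a) * J⁻¹ := by rw [one_div, mul_inv, one_div]


end
end

section
/- Let K ∈ ℝ, N ∈ (1,∞), D > 0 (with D ≤ π√((N−1)/K) if K > 0), and let h : [0,D] → [0,∞) be a Borel function. Then h is an MCP(K,N)-density on [0,D] if and only if for all 0 ≤ x₀ ≤ x₁ ≤ D both ( s_{K/(N−1)}(D−x₁) / s_{K/(N−1)}(D−x₀) )^{N−1} · h(x₀) ≤ h(x₁) and h(x₁) ≤ ( s_{K/(N−1)}(x₁) / s_{K/(N−1)}(x₀) )^{N−1} · h(x₀) hold (with the conventions that a ratio with zero denominator and positive numerator is +∞, and 0/0 is interpreted so that the corresponding inequality is trivially satisfied). -/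
open MeasureTheory Filter

noncomputable section

lemma sK_zero (κ : ℝ) : sK κ 0 = 0 := by
  unfold sK; split_ifs <;> simp

lemma sK_nonneg {κ θ : ℝ} (h0 : 0 ≤ θ) (hπ : 0 < κ → Real.sqrt κ * θ ≤ Real.pi) :
    0 ≤ sK κ θ := by
  unfold sK
  split_ifs with h1 h2
  · exact div_nonneg (Real.sin_nonneg_of_nonneg_of_le_pi
      (mul_nonneg (Real.sqrt_nonneg κ) h0) (hπ h1)) (Real.sqrt_nonneg κ)
  · exact h0
  · exact div_nonneg (Real.sinh_nonneg_iff.2 (mul_nonneg (Real.sqrt_nonneg _) h0)) (Real.sqrt_nonneg _)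

lemma sK_pos {κ θ : ℝ} (h0 : 0 < θ) (hπ : 0 < κ → Real.sqrt κ * θ < Real.pi) :
    0 < sK κ θ := by
  unfold sK
  split_ifs with h1 h2
  · exact div_pos (Real.sin_pos_of_pos_of_lt_pi
      (mul_pos (Real.sqrt_pos.2 h1) h0) (hπ h1)) (Real.sqrt_pos.2 h1)
  · exact h0
  · have hk : 0 < -κ := by
      rcases lt_trichotomy κ 0 with h | h | h
      · linarith
      · exact absurd h h2
      · exact absurd h h1
    exact div_pos (Real.sinh_pos_iff.2 (mul_pos (Real.sqrt_pos.2 hk) h0)) (Real.sqrt_pos.2 hk)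

lemma sK_cross {κ a b e : ℝ} (ha : 0 ≤ a) (hab : a ≤ b) (he : 0 ≤ e)
    (hπ : 0 < κ → Real.sqrt κ * (b + e) ≤ Real.pi) :
    sK κ a * sK κ (b + e) ≤ sK κ (a + e) * sK κ b := by
  unfold sK
  split_ifs with h1 h2
  · have hs : (0:ℝ) < Real.sqrt κ := Real.sqrt_pos.2 h1
    have hπ' := hπ h1
    have hA : (0:ℝ) ≤ Real.sqrt κ * a := mul_nonneg hs.le ha
    have hAB : Real.sqrt κ * a ≤ Real.sqrt κ * b := by nlinarith
    have hE : (0:ℝ) ≤ Real.sqrt κ * e := mul_nonneg hs.le he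
    have hBE : Real.sqrt κ * b + Real.sqrt κ * e ≤ Real.pi := by nlinarith [mul_add (Real.sqrt κ) b e]
    have hsinE : 0 ≤ Real.sin (Real.sqrt κ * e) :=
      Real.sin_nonneg_of_nonneg_of_le_pi hE (by nlinarith [mul_nonneg hs.le (le_trans ha hab)])
    have hsinAB : Real.sin (Real.sqrt κ * a - Real.sqrt κ * b) ≤ 0 := by
      apply Real.sin_nonpos_of_nonpos_of_neg_pi_le (by linarith)
      nlinarith
    have key : Real.sin (Real.sqrt κ * a) * Real.sin (Real.sqrt κ * (b + e))
        ≤ Real.sin (Real.sqrt κ * (a + e)) * Real.sin (Real.sqrt κ * b) := by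
      rw [mul_add, mul_add, Real.sin_add, Real.sin_add]
      nlinarith [Real.sin_sub (Real.sqrt κ * a) (Real.sqrt κ * b)]
    rw [div_mul_div_comm, div_mul_div_comm]
    exact div_le_div_of_nonneg_right key (by positivity) |>.trans_eq rfl
  · nlinarith
  · have key : Real.sinh (Real.sqrt (-κ) * a) * Real.sinh (Real.sqrt (-κ) * (b + e))
        ≤ Real.sinh (Real.sqrt (-κ) * (a + e)) * Real.sinh (Real.sqrt (-κ) * b) := by
      rw [mul_add, mul_add, Real.sinh_add, Real.sinh_add]
      have hk : (0:ℝ) ≤ Real.sqrt (-κ) := Real.sqrt_nonneg _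
      have h1' : Real.sinh (Real.sqrt (-κ) * a - Real.sqrt (-κ) * b) ≤ 0 :=
        Real.sinh_nonpos_iff.2 (by nlinarith)
      have h2' : 0 ≤ Real.sinh (Real.sqrt (-κ) * e) :=
        Real.sinh_nonneg_iff.2 (by positivity)
      nlinarith [Real.sinh_sub (Real.sqrt (-κ) * a) (Real.sqrt (-κ) * b)]
    rw [div_mul_div_comm, div_mul_div_comm]
    exact div_le_div_of_nonneg_right key (by positivity)

lemma rpow_div_mul_div {x y p : ℝ} (hx : 0 < x) (hy : 0 < y) :
    (x / y) ^ p * (y / x) ^ p = 1 := by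
  rw [← Real.mul_rpow (by positivity) (by positivity), div_mul_div_comm, mul_comm y x,
    div_self (by positivity), Real.one_rpow]

set_option maxHeartbeats 1000000 in
/-- Characterization of `MCP(K,N)`-densities on `[0,D]` via the two-sided comparison
inequalities (E:MCPdef2); ratios with zero denominator and positive numerator are `+∞`
(so the lower bound forces `h x₀ = 0` and the upper bound is trivially satisfied),
and `0/0` situations make the corresponding inequality trivially satisfied. -/
theorem mcp_density_iff_two_sided (K N D : ℝ) (hN : 1 < N) (hD : 0 < D)
    (hDK : 0 < K → D ≤ Real.pi * Real.sqrt ((N - 1) / K))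
    (h : ℝ → ℝ) (hmeas : Measurable h) (hpos : ∀ x ∈ Set.Icc (0:ℝ) D, 0 ≤ h x) :
    IsMCPDensity K N (Set.Icc 0 D) h ↔
      ∀ x₀ x₁ : ℝ, 0 ≤ x₀ → x₀ ≤ x₁ → x₁ ≤ D →
        ((sK (K / (N - 1)) (D - x₀) ≠ 0 →
            (sK (K / (N - 1)) (D - x₁) / sK (K / (N - 1)) (D - x₀)) ^ (N - 1) * h x₀ ≤ h x₁) ∧
         (sK (K / (N - 1)) (D - x₀) = 0 → sK (K / (N - 1)) (D - x₁) ≠ 0 → h x₀ = 0)) ∧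
        (sK (K / (N - 1)) x₀ ≠ 0 →
            h x₁ ≤ (sK (K / (N - 1)) x₁ / sK (K / (N - 1)) x₀) ^ (N - 1) * h x₀) := by
  have hN1 : (0:ℝ) < N - 1 := by linarith
  have hKiff : 0 < K / (N - 1) ↔ 0 < K :=
    ⟨fun hk => by nlinarith [mul_pos hk hN1, div_mul_cancel₀ K hN1.ne'],
     fun hk => div_pos hk hN1⟩
  have hsqrt_eq : 0 < K → Real.sqrt ((N - 1) / K) = (Real.sqrt (K / (N - 1)))⁻¹ := by
    intro hK
    rw [← Real.sqrt_inv]; congr 1; rw [inv_div]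
  have hexc : ∀ r : ℝ, 0 < K →
      (Real.pi * Real.sqrt ((N - 1) / K) ≤ r ↔ Real.pi ≤ Real.sqrt (K / (N - 1)) * r) := by
    intro r hK
    have hκ : 0 < K / (N - 1) := div_pos hK hN1
    have hs : 0 < Real.sqrt (K / (N - 1)) := Real.sqrt_pos.2 hκ
    rw [hsqrt_eq hK, ← div_eq_mul_inv, div_le_iff₀ hs, mul_comm]
  have hmain : ∀ θ : ℝ, 0 < K / (N - 1) → θ ≤ D → Real.sqrt (K / (N - 1)) * θ ≤ Real.pi := by
    intro θ hκ hθ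
    have hK := hKiff.1 hκ
    have hs : 0 < Real.sqrt (K / (N - 1)) := Real.sqrt_pos.2 hκ
    have hle := hDK hK
    rw [hsqrt_eq hK, ← div_eq_mul_inv, le_div_iff₀ hs] at hle
    nlinarith
  have hsnn : ∀ θ : ℝ, 0 ≤ θ → θ ≤ D → 0 ≤ sK (K / (N - 1)) θ :=
    fun θ h0 hθ => sK_nonneg h0 fun hκ => hmain θ hκ hθ
  have hzero : ∀ θ : ℝ, 0 < θ → θ ≤ D → sK (K / (N - 1)) θ = 0 →
      0 < K / (N - 1) ∧ Real.sqrt (K / (N - 1)) * θ = Real.pi := by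
    intro θ h0 hθ hz
    by_cases hκ : 0 < K / (N - 1)
    · refine ⟨hκ, ?_⟩
      rcases eq_or_lt_of_le (hmain θ hκ hθ) with heq | hlt
      · exact heq
      · exact absurd hz (ne_of_gt (sK_pos h0 fun _ => hlt))
    · exact absurd hz (ne_of_gt (sK_pos h0 fun hk => absurd hk hκ))
  have hDIcc : D ∈ Set.Icc (0:ℝ) D := ⟨hD.le, le_rfl⟩
  constructor
  · -- forward
    rintro ⟨-, -, Hm⟩
    intro x₀ x₁ h0 h01 h1D
    have hx₀I : x₀ ∈ Set.Icc (0:ℝ) D := ⟨h0, le_trans h01 h1D⟩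
    have hx₁I : x₁ ∈ Set.Icc (0:ℝ) D := ⟨le_trans h0 h01, h1D⟩
    refine ⟨⟨?_, ?_⟩, ?_⟩
    · -- (a)
      intro hne
      by_cases heq : x₀ = x₁
      · subst heq
        rw [div_self hne, Real.one_rpow, one_mul]
      · have hlt : x₀ < x₁ := lt_of_le_of_ne h01 heq
        have hx₀D : x₀ < D := lt_of_lt_of_le hlt h1D
        have hDx : D - x₀ ≠ 0 := ne_of_gt (by linarith)
        set t := (x₁ - x₀) / (D - x₀) with htdef
        have ht : t ∈ Set.Icc (0:ℝ) 1 := Set.mem_Icc.2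
          ⟨div_nonneg (by linarith) (by linarith),
           (div_le_one (by linarith)).2 (by linarith)⟩
        obtain ⟨hexc', hineq⟩ := (Hm x₀ hx₀I D hDIcc t ht).2 (ne_of_lt hx₀D)
        have habs : |D - x₀| = D - x₀ := abs_of_pos (by linarith)
        by_cases hcase : 0 < K ∧ Real.pi * Real.sqrt ((N - 1) / K) ≤ |D - x₀|
        · rw [hexc' hcase, mul_zero]
          exact hpos x₁ hx₁I
        · have hin := hineq hcase
          have e1 : (1 - t) * |D - x₀| = D - x₁ := by
            rw [habs, htdef]; field_simp; ring
          have e2 : t * D + (1 - t) * x₀ = x₁ := by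
            rw [htdef]; field_simp; ring
          rw [e1, habs, e2] at hin
          exact hin
    · -- (b)
      intro hz h1'
      have hlt : x₀ < x₁ := lt_of_le_of_ne h01 (fun e => h1' (e ▸ hz))
      have hD0 : 0 < D - x₀ := by linarith [lt_of_lt_of_le hlt h1D]
      obtain ⟨hκ, heq⟩ := hzero (D - x₀) hD0 (by linarith) hz
      have hK := hKiff.1 hκ
      have hs : 0 < Real.sqrt (K / (N - 1)) := Real.sqrt_pos.2 hκ
      have hπD := hmain D hκ le_rfl
      have hx00 : x₀ = 0 := by nlinarith
      subst hx00
      refine ((Hm 0 ⟨le_rfl, hD.le⟩ D hDIcc 0 (Set.mem_Icc.2 ⟨le_rfl, zero_le_one⟩)).2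
        (ne_of_lt hD)).1 ⟨hK, ?_⟩
      rw [hexc _ hK]
      rw [sub_zero] at heq
      rw [show |D - 0| = D by rw [sub_zero]; exact abs_of_pos hD]
      exact heq.ge
    · -- (c)
      intro hs0
      by_cases heq : x₀ = x₁
      · subst heq
        rw [div_self hs0, Real.one_rpow, one_mul]
      · have hlt : x₀ < x₁ := lt_of_le_of_ne h01 heq
        have hx0pos : 0 < x₀ := by
          rcases eq_or_lt_of_le h0 with he | hl
          · exact absurd (he ▸ sK_zero (K / (N - 1)) : sK (K / (N - 1)) x₀ = 0) hs0
          · exact hl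
        have hx1pos : 0 < x₁ := lt_trans hx0pos hlt
        set t := (x₁ - x₀) / x₁ with htdef
        have ht : t ∈ Set.Icc (0:ℝ) 1 := Set.mem_Icc.2
          ⟨div_nonneg (by linarith) (by linarith),
           (div_le_one hx1pos).2 (by linarith)⟩
        obtain ⟨hexc', hineq⟩ := (Hm x₁ hx₁I 0 ⟨le_rfl, hD.le⟩ t ht).2 (ne_of_gt hx1pos)
        have hab : |(0:ℝ) - x₁| = x₁ := by rw [zero_sub, abs_neg, abs_of_pos hx1pos]
        by_cases hcase : 0 < K ∧ Real.pi * Real.sqrt ((N - 1) / K) ≤ |(0:ℝ) - x₁|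
        · rw [hexc' hcase]
          exact mul_nonneg (Real.rpow_nonneg
            (div_nonneg (hsnn x₁ hx1pos.le h1D) (hsnn x₀ h0 (by linarith))) _)
            (hpos x₀ hx₀I)
        · have hsx1 : 0 < sK (K / (N - 1)) x₁ := by
            apply sK_pos hx1pos
            intro hκ
            have hK := hKiff.1 hκ
            rcases eq_or_lt_of_le (hmain x₁ hκ h1D) with he | hl
            · exact absurd ⟨hK, (hexc _ hK).2 (by rw [hab]; exact he.ge)⟩ hcase
            · exact hl
          have hin := hineq hcase
          have e1 : (1 - t) * |(0:ℝ) - x₁| = x₀ := by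
            rw [hab, htdef]; field_simp; ring
          have e2 : t * 0 + (1 - t) * x₁ = x₀ := by
            rw [htdef]; field_simp; ring
          rw [e1, hab, e2] at hin
          have hsx0 : 0 < sK (K / (N - 1)) x₀ :=
            lt_of_le_of_ne (hsnn x₀ h0 (by linarith)) (Ne.symm hs0)
          calc h x₁ = ((sK (K / (N - 1)) x₁ / sK (K / (N - 1)) x₀) ^ (N - 1) *
                (sK (K / (N - 1)) x₀ / sK (K / (N - 1)) x₁) ^ (N - 1)) * h x₁ := by
                rw [rpow_div_mul_div hsx1 hsx0, one_mul]
            _ = (sK (K / (N - 1)) x₁ / sK (K / (N - 1)) x₀) ^ (N - 1) *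
                ((sK (K / (N - 1)) x₀ / sK (K / (N - 1)) x₁) ^ (N - 1) * h x₁) := by ring
            _ ≤ (sK (K / (N - 1)) x₁ / sK (K / (N - 1)) x₀) ^ (N - 1) * h x₀ :=
                mul_le_mul_of_nonneg_left hin
                  (Real.rpow_nonneg (div_nonneg hsx1.le hsx0.le) _)
  · -- reverse
    intro Htwo
    refine ⟨hmeas, hpos, ?_⟩
    intro x₀ hx₀ x₁ hx₁ t ht
    rw [Set.mem_Icc] at ht hx₀ hx₁
    constructor
    · intro _
      nlinarith [hpos x₀ (Set.mem_Icc.2 hx₀), ht.1, ht.2]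
    · intro hne
      have hdD : |x₁ - x₀| ≤ D := abs_sub_le_iff.2 ⟨by linarith [hx₀.1, hx₁.2], by linarith [hx₁.1, hx₀.2]⟩
      constructor
      · rintro ⟨hK, hdist⟩
        have hκ : 0 < K / (N - 1) := div_pos hK hN1
        have hs : 0 < Real.sqrt (K / (N - 1)) := Real.sqrt_pos.2 hκ
        have hπ : Real.pi ≤ Real.sqrt (K / (N - 1)) * |x₁ - x₀| := (hexc _ hK).1 hdist
        have hπD := hmain D hκ le_rfl
        have hdeq : |x₁ - x₀| = D := le_antisymm hdD (by nlinarith)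
        have hκD : Real.sqrt (K / (N - 1)) * D = Real.pi := by nlinarith
        have hsD : sK (K / (N - 1)) D = 0 := by
          unfold sK; rw [if_pos hκ, hκD, Real.sin_pi, zero_div]
        have hhalf : 0 < sK (K / (N - 1)) (D / 2) :=
          sK_pos (by linarith) (fun _ => by nlinarith [Real.pi_pos])
        rcases abs_cases (x₁ - x₀) with ⟨he, _⟩ | ⟨he, _⟩
        · have hx00 : x₀ = 0 := by
            rw [he] at hdeq; linarith [hx₁.2, hx₀.1]
          subst hx00
          refine (Htwo 0 (D / 2) le_rfl (by linarith) (by linarith)).1.2 ?_ ?_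
          · rw [sub_zero]; exact hsD
          · rw [show D - D / 2 = D / 2 by ring]; exact ne_of_gt hhalf
        · have hx0D : x₀ = D := by
            rw [he] at hdeq; linarith [hx₀.2, hx₁.1]
          have hc := (Htwo (D / 2) D (by linarith) (by linarith) le_rfl).2 (ne_of_gt hhalf)
          rw [hsD, zero_div, Real.zero_rpow hN1.ne', zero_mul] at hc
          rw [hx0D]
          exact le_antisymm hc (hpos D hDIcc)
      · intro hcase
        set d := |x₁ - x₀| with hddef
        have hd0 : 0 < d := abs_pos.2 (sub_ne_zero.2 (Ne.symm hne))
        have hsd : 0 < sK (K / (N - 1)) d := by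
          apply sK_pos hd0
          intro hκ
          have hK := hKiff.1 hκ
          by_contra hge
          push_neg at hge
          exact hcase ⟨hK, (hexc _ hK).2 hge⟩
        set y := t * x₁ + (1 - t) * x₀ with hydef
        have hco : 0 ≤ (1 - t) * d := mul_nonneg (by linarith [ht.2]) hd0.le
        have hcd : (1 - t) * d ≤ d := by nlinarith [ht.1, ht.2]
        have hcoD : (1 - t) * d ≤ D := le_trans hcd hdD
        have hcnn : 0 ≤ sK (K / (N - 1)) ((1 - t) * d) := hsnn _ hco hcoD
        rcases hne.lt_or_gt with hlt | hlt
        · -- x₀ < x₁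
          have hdd : d = x₁ - x₀ := abs_of_pos (by linarith)
          have hy0 : x₀ ≤ y := by rw [hydef]; nlinarith [ht.1]
          have hy1 : y ≤ x₁ := by rw [hydef]; nlinarith [ht.2]
          have hyI : y ∈ Set.Icc (0:ℝ) D := ⟨le_trans hx₀.1 hy0, le_trans hy1 hx₁.2⟩
          by_cases hsx : sK (K / (N - 1)) (D - x₀) = 0
          · have hDx0 : 0 < D - x₀ := by linarith [lt_of_lt_of_le hlt hx₁.2]
            obtain ⟨hκ, heq⟩ := hzero (D - x₀) hDx0 (by linarith [hx₀.1]) hsx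
            have hs : 0 < Real.sqrt (K / (N - 1)) := Real.sqrt_pos.2 hκ
            have hπD := hmain D hκ le_rfl
            have hms := mul_sub (Real.sqrt (K / (N - 1))) D x₀
            have hx0le : Real.sqrt (K / (N - 1)) * x₀ ≤ 0 := by linarith
            have hx00 : x₀ = 0 := le_antisymm (by nlinarith [hx₀.1]) hx₀.1
            have hκD : Real.sqrt (K / (N - 1)) * D = Real.pi := by
              rw [hx00, sub_zero] at heq; exact heq
            have hhalf : 0 < sK (K / (N - 1)) (D / 2) :=
              sK_pos (by linarith) (fun _ => by nlinarith [Real.pi_pos])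
            have hh0 : h x₀ = 0 := by
              rw [hx00]
              refine (Htwo 0 (D / 2) le_rfl (by linarith) (by linarith)).1.2 ?_ ?_
              · rw [hx00, sub_zero] at hsx
                rw [sub_zero]; exact hsx
              · rw [show D - D / 2 = D / 2 by ring]; exact ne_of_gt hhalf
            rw [hh0, mul_zero]
            exact hpos y hyI
          · have hsx' : 0 < sK (K / (N - 1)) (D - x₀) :=
              lt_of_le_of_ne (hsnn _ (by linarith [lt_of_lt_of_le hlt hx₁.2]) (by linarith [hx₀.1]))
                (Ne.symm hsx)
            have hcross := sK_cross hco hcd (by linarith [hx₁.2] : (0:ℝ) ≤ D - x₁)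
              (fun hκ => hmain _ hκ (by rw [hdd]; linarith [hx₀.1]))
            have ea : (1 - t) * d + (D - x₁) = D - y := by rw [hdd, hydef]; ring
            have eb : d + (D - x₁) = D - x₀ := by rw [hdd]; ring
            rw [ea, eb] at hcross
            have hratio : sK (K / (N - 1)) ((1 - t) * d) / sK (K / (N - 1)) d ≤
                sK (K / (N - 1)) (D - y) / sK (K / (N - 1)) (D - x₀) :=
              (div_le_div_iff₀ hsd hsx').2 hcross
            have hineq2 := (Htwo x₀ y hx₀.1 hy0 hyI.2).1.1 (ne_of_gt hsx')
            calc (sK (K / (N - 1)) ((1 - t) * d) / sK (K / (N - 1)) d) ^ (N - 1) * h x₀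
                ≤ (sK (K / (N - 1)) (D - y) / sK (K / (N - 1)) (D - x₀)) ^ (N - 1) * h x₀ :=
                  mul_le_mul_of_nonneg_right
                    (Real.rpow_le_rpow (div_nonneg hcnn hsd.le) hratio hN1.le)
                    (hpos x₀ (Set.mem_Icc.2 hx₀))
              _ ≤ h y := hineq2
        · -- x₁ < x₀
          have hdd : d = x₀ - x₁ := by rw [hddef, abs_of_neg (by linarith : x₁ - x₀ < 0)]; ring
          have hy0 : x₁ ≤ y := by rw [hydef]; nlinarith [ht.2]
          have hy1 : y ≤ x₀ := by rw [hydef]; nlinarith [ht.1]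
          have hyI : y ∈ Set.Icc (0:ℝ) D := ⟨le_trans hx₁.1 hy0, le_trans hy1 hx₀.2⟩
          by_cases hsy : sK (K / (N - 1)) y = 0
          · rcases eq_or_lt_of_le (le_trans hx₁.1 hy0) with hy00 | hypos
            · -- y = 0, so t = 1
              have hx0pos : 0 < x₀ := lt_of_le_of_lt hx₁.1 hlt
              have h1t : (1 - t) * x₀ ≤ 0 := by nlinarith [mul_nonneg ht.1 hx₁.1]
              have ht1 : t = 1 := by nlinarith [ht.2]
              rw [ht1, sub_self, zero_mul, sK_zero, zero_div,
                Real.zero_rpow hN1.ne', zero_mul]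
              exact hpos y hyI
            · obtain ⟨hκ, heq⟩ := hzero y hypos hyI.2 hsy
              have hs : 0 < Real.sqrt (K / (N - 1)) := Real.sqrt_pos.2 hκ
              have hπD := hmain D hκ le_rfl
              have hyD : y = D := by nlinarith [hyI.2]
              have hyx0 : y = x₀ := le_antisymm hy1 (hyD ▸ hx₀.2)
              have ht0 : t = 0 := by
                have h' : t * (x₁ - x₀) = 0 := by rw [hydef] at hyx0; linarith
                rcases mul_eq_zero.1 h' with h'' | h''
                · exact h''
                · exact absurd h'' (sub_ne_zero.2 (ne_of_lt hlt))
              rw [ht0, sub_zero, one_mul, div_self (ne_of_gt hsd), Real.one_rpow, one_mul, hyx0]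
          · have hsy' : 0 < sK (K / (N - 1)) y :=
              lt_of_le_of_ne (hsnn y hyI.1 hyI.2) (Ne.symm hsy)
            have hcross := sK_cross hco hcd hx₁.1
              (fun hκ => hmain _ hκ (by rw [hdd]; linarith [hx₀.2]))
            have ea : (1 - t) * d + x₁ = y := by rw [hdd, hydef]; ring
            have eb : d + x₁ = x₀ := by rw [hdd]; ring
            rw [ea, eb] at hcross
            have h2 := (Htwo y x₀ hyI.1 hy1 hx₀.2).2 (ne_of_gt hsy')
            by_cases hsx0 : sK (K / (N - 1)) x₀ = 0
            · rw [hsx0, zero_div, Real.zero_rpow hN1.ne', zero_mul] at h2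
              have hh0 : h x₀ = 0 := le_antisymm h2 (hpos x₀ (Set.mem_Icc.2 hx₀))
              rw [hh0, mul_zero]
              exact hpos y hyI
            · have hsx0' : 0 < sK (K / (N - 1)) x₀ :=
                lt_of_le_of_ne (hsnn x₀ hx₀.1 hx₀.2) (Ne.symm hsx0)
              have hratio : sK (K / (N - 1)) ((1 - t) * d) / sK (K / (N - 1)) d ≤
                  sK (K / (N - 1)) y / sK (K / (N - 1)) x₀ :=
                (div_le_div_iff₀ hsd hsx0').2 hcross
              calc (sK (K / (N - 1)) ((1 - t) * d) / sK (K / (N - 1)) d) ^ (N - 1) * h x₀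
                  ≤ (sK (K / (N - 1)) y / sK (K / (N - 1)) x₀) ^ (N - 1) * h x₀ :=
                    mul_le_mul_of_nonneg_right
                      (Real.rpow_le_rpow (div_nonneg hcnn hsd.le) hratio hN1.le)
                      (hpos x₀ (Set.mem_Icc.2 hx₀))
                _ ≤ (sK (K / (N - 1)) y / sK (K / (N - 1)) x₀) ^ (N - 1) *
                    ((sK (K / (N - 1)) x₀ / sK (K / (N - 1)) y) ^ (N - 1) * h y) :=
                    mul_le_mul_of_nonneg_left h2
                      (Real.rpow_nonneg (div_nonneg hsy'.le hsx0'.le) _)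
                _ = h y := by
                    rw [← mul_assoc, rpow_div_mul_div hsy' hsx0', one_mul]

end
end

section
/- Let K ∈ ℝ, N ∈ (1,∞), D > 0 (with D ≤ π√((N−1)/K) if K > 0). Then the function x ↦ s_{K/(N−1)}(D−x) / s_{K/(N−1)}(x) is non-increasing on (0,D); moreover it is strictly decreasing unless K > 0 and D = π√((N−1)/K) (in which case it is constantly equal to 1). Equivalently, for all 0 < x₀ ≤ x₁ < D one has s_{K/(N−1)}(D−x₁) · s_{K/(N−1)}(x₀) ≤ s_{K/(N−1)}(D−x₀) · s_{K/(N−1)}(x₁), with strict inequality when x₀ < x₁ unless K > 0 and D = π√((N−1)/K). -/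
open MeasureTheory Filter

noncomputable section

lemma sK_pos_s7 {κ x : ℝ} (hx : 0 < x) (h : 0 < κ → Real.sqrt κ * x < Real.pi) :
    0 < sK κ x := by
  unfold sK
  rcases lt_trichotomy κ 0 with hκ | hκ | hκ
  · rw [if_neg (by linarith), if_neg (by linarith)]
    exact div_pos (Real.sinh_pos_iff.mpr (mul_pos (Real.sqrt_pos.mpr (by linarith)) hx))
      (Real.sqrt_pos.mpr (by linarith))
  · subst hκ; simpa using hx
  · rw [if_pos hκ]
    have hs : 0 < Real.sqrt κ := Real.sqrt_pos.mpr hκ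
    exact div_pos (Real.sin_pos_of_pos_of_lt_pi (mul_pos hs hx) (h hκ)) hs

lemma sK_cross_s7 {κ D x₀ x₁ : ℝ} (hx₀ : 0 < x₀) (hle : x₀ ≤ x₁) (hx₁ : x₁ < D)
    (hκ : 0 < κ → Real.sqrt κ * D ≤ Real.pi) :
    sK κ (D - x₁) * sK κ x₀ ≤ sK κ (D - x₀) * sK κ x₁ := by
  unfold sK
  rcases lt_trichotomy κ 0 with h | h | h
  · simp only [if_neg (show ¬(0:ℝ) < κ by linarith), if_neg (show ¬κ = 0 by linarith)]
    have hs : 0 < Real.sqrt (-κ) := Real.sqrt_pos.mpr (by linarith)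
    rw [div_mul_div_comm, div_mul_div_comm, div_le_div_iff_of_pos_right (mul_pos hs hs)]
    have e1 : Real.sqrt (-κ) * (D - x₁) = Real.sqrt (-κ) * D - Real.sqrt (-κ) * x₁ := by ring
    have e2 : Real.sqrt (-κ) * (D - x₀) = Real.sqrt (-κ) * D - Real.sqrt (-κ) * x₀ := by ring
    have key : 0 ≤ Real.sinh (Real.sqrt (-κ) * D) *
        Real.sinh (Real.sqrt (-κ) * x₁ - Real.sqrt (-κ) * x₀) :=
      mul_nonneg (Real.sinh_nonneg_iff.mpr (by nlinarith)) (Real.sinh_nonneg_iff.mpr (by nlinarith))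
    rw [Real.sinh_sub] at key
    rw [e1, e2, Real.sinh_sub, Real.sinh_sub]
    nlinarith [key]
  · subst h; simp only [lt_irrefl, if_neg, if_pos, if_true]
    norm_num; nlinarith
  · simp only [if_pos h]
    have hs : 0 < Real.sqrt κ := Real.sqrt_pos.mpr h
    rw [div_mul_div_comm, div_mul_div_comm, div_le_div_iff_of_pos_right (mul_pos hs hs)]
    have e1 : Real.sqrt κ * (D - x₁) = Real.sqrt κ * D - Real.sqrt κ * x₁ := by ring
    have e2 : Real.sqrt κ * (D - x₀) = Real.sqrt κ * D - Real.sqrt κ * x₀ := by ring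
    have key : 0 ≤ Real.sin (Real.sqrt κ * D) *
        Real.sin (Real.sqrt κ * x₁ - Real.sqrt κ * x₀) := by
      apply mul_nonneg
      · exact Real.sin_nonneg_of_nonneg_of_le_pi (by nlinarith) (hκ h)
      · apply Real.sin_nonneg_of_nonneg_of_le_pi (by nlinarith)
        nlinarith [hκ h, hs]
    rw [Real.sin_sub] at key
    rw [e1, e2, Real.sin_sub, Real.sin_sub]
    nlinarith [key]

lemma sK_cross_strict {κ D x₀ x₁ : ℝ} (hx₀ : 0 < x₀) (hlt : x₀ < x₁) (hx₁ : x₁ < D)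
    (hκ : 0 < κ → Real.sqrt κ * D < Real.pi) :
    sK κ (D - x₁) * sK κ x₀ < sK κ (D - x₀) * sK κ x₁ := by
  unfold sK
  rcases lt_trichotomy κ 0 with h | h | h
  · simp only [if_neg (show ¬(0:ℝ) < κ by linarith), if_neg (show ¬κ = 0 by linarith)]
    have hs : 0 < Real.sqrt (-κ) := Real.sqrt_pos.mpr (by linarith)
    rw [div_mul_div_comm, div_mul_div_comm, div_lt_div_iff_of_pos_right (mul_pos hs hs)]
    have e1 : Real.sqrt (-κ) * (D - x₁) = Real.sqrt (-κ) * D - Real.sqrt (-κ) * x₁ := by ring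
    have e2 : Real.sqrt (-κ) * (D - x₀) = Real.sqrt (-κ) * D - Real.sqrt (-κ) * x₀ := by ring
    have key : 0 < Real.sinh (Real.sqrt (-κ) * D) *
        Real.sinh (Real.sqrt (-κ) * x₁ - Real.sqrt (-κ) * x₀) :=
      mul_pos (Real.sinh_pos_iff.mpr (by nlinarith)) (Real.sinh_pos_iff.mpr (by nlinarith))
    rw [Real.sinh_sub] at key
    rw [e1, e2, Real.sinh_sub, Real.sinh_sub]
    nlinarith [key]
  · subst h; simp only [lt_irrefl, if_neg, if_pos, if_true]
    norm_num; nlinarith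
  · simp only [if_pos h]
    have hs : 0 < Real.sqrt κ := Real.sqrt_pos.mpr h
    rw [div_mul_div_comm, div_mul_div_comm, div_lt_div_iff_of_pos_right (mul_pos hs hs)]
    have e1 : Real.sqrt κ * (D - x₁) = Real.sqrt κ * D - Real.sqrt κ * x₁ := by ring
    have e2 : Real.sqrt κ * (D - x₀) = Real.sqrt κ * D - Real.sqrt κ * x₀ := by ring
    have key : 0 < Real.sin (Real.sqrt κ * D) *
        Real.sin (Real.sqrt κ * x₁ - Real.sqrt κ * x₀) := by
      apply mul_pos
      · exact Real.sin_pos_of_pos_of_lt_pi (by nlinarith) (hκ h)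
      · apply Real.sin_pos_of_pos_of_lt_pi (by nlinarith)
        nlinarith [hκ h, hs]
    rw [Real.sin_sub] at key
    rw [e1, e2, Real.sin_sub, Real.sin_sub]
    nlinarith [key]

/-- The function `x ↦ s_{K/(N−1)}(D−x)/s_{K/(N−1)}(x)` is non-increasing on `(0,D)`,
strictly decreasing unless `K > 0` and `D = π√((N−1)/K)` (in which case it is
constantly `1`); equivalently, the corresponding cross-product inequalities hold. -/
theorem sK_ratio_antitone (K N D : ℝ) (hN : 1 < N) (hD : 0 < D)
    (hDK : 0 < K → D ≤ Real.pi * Real.sqrt ((N - 1) / K)) :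
    AntitoneOn (fun x => sK (K / (N - 1)) (D - x) / sK (K / (N - 1)) x) (Set.Ioo 0 D) ∧
    (¬(0 < K ∧ D = Real.pi * Real.sqrt ((N - 1) / K)) →
      StrictAntiOn (fun x => sK (K / (N - 1)) (D - x) / sK (K / (N - 1)) x) (Set.Ioo 0 D)) ∧
    ((0 < K ∧ D = Real.pi * Real.sqrt ((N - 1) / K)) →
      ∀ x ∈ Set.Ioo (0:ℝ) D, sK (K / (N - 1)) (D - x) / sK (K / (N - 1)) x = 1) ∧
    (∀ x₀ x₁ : ℝ, 0 < x₀ → x₀ ≤ x₁ → x₁ < D →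
      sK (K / (N - 1)) (D - x₁) * sK (K / (N - 1)) x₀ ≤
        sK (K / (N - 1)) (D - x₀) * sK (K / (N - 1)) x₁) ∧
    (¬(0 < K ∧ D = Real.pi * Real.sqrt ((N - 1) / K)) →
      ∀ x₀ x₁ : ℝ, 0 < x₀ → x₀ < x₁ → x₁ < D →
        sK (K / (N - 1)) (D - x₁) * sK (K / (N - 1)) x₀ <
          sK (K / (N - 1)) (D - x₀) * sK (K / (N - 1)) x₁) := by
  set κ := K / (N - 1) with hκdef
  have hN' : (0:ℝ) < N - 1 := by linarith
  have hKκ : 0 < K ↔ 0 < κ := by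
    constructor
    · intro h; exact div_pos h hN'
    · intro h; nlinarith [mul_pos h hN', div_mul_cancel₀ K (ne_of_gt hN')]
  have hπ : 0 < K → Real.pi * Real.sqrt ((N - 1) / K) = Real.pi / Real.sqrt κ := by
    intro hK
    have : (N - 1) / K = κ⁻¹ := by rw [hκdef, inv_div]
    rw [this, Real.sqrt_inv, div_eq_mul_inv]
  -- weak bound: 0 < κ → √κ * D ≤ π
  have hb : 0 < κ → Real.sqrt κ * D ≤ Real.pi := by
    intro hκ
    have hK := hKκ.mpr hκ
    have hs : 0 < Real.sqrt κ := Real.sqrt_pos.mpr hκ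
    have := hDK hK
    rw [hπ hK] at this
    rw [mul_comm]
    exact (le_div_iff₀ hs).mp this
  -- strict bound under the non-degeneracy assumption
  have hbs : ¬(0 < K ∧ D = Real.pi * Real.sqrt ((N - 1) / K)) →
      (0 < κ → Real.sqrt κ * D < Real.pi) := by
    intro hne hκ
    have hK := hKκ.mpr hκ
    have hs : 0 < Real.sqrt κ := Real.sqrt_pos.mpr hκ
    have h1 := hDK hK
    rw [hπ hK] at h1
    have h2 : D ≠ Real.pi / Real.sqrt κ := by
      intro h; exact hne ⟨hK, by rw [hπ hK]; exact h⟩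
    have : D < Real.pi / Real.sqrt κ := lt_of_le_of_ne h1 h2
    rw [mul_comm]
    exact (lt_div_iff₀ hs).mp this
  -- positivity on (0, D)
  have hpos : ∀ x ∈ Set.Ioo (0:ℝ) D, 0 < sK κ x := by
    rintro x ⟨hx0, hxD⟩
    refine sK_pos_s7 hx0 (fun hκ => ?_)
    have hs : 0 < Real.sqrt κ := Real.sqrt_pos.mpr hκ
    calc Real.sqrt κ * x < Real.sqrt κ * D := by nlinarith
      _ ≤ Real.pi := hb hκ
  -- the four statements
  have part4 : ∀ x₀ x₁ : ℝ, 0 < x₀ → x₀ ≤ x₁ → x₁ < D →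
      sK κ (D - x₁) * sK κ x₀ ≤ sK κ (D - x₀) * sK κ x₁ :=
    fun x₀ x₁ h0 hle h1 => sK_cross_s7 h0 hle h1 hb
  have part5 : ¬(0 < K ∧ D = Real.pi * Real.sqrt ((N - 1) / K)) →
      ∀ x₀ x₁ : ℝ, 0 < x₀ → x₀ < x₁ → x₁ < D →
      sK κ (D - x₁) * sK κ x₀ < sK κ (D - x₀) * sK κ x₁ :=
    fun hne x₀ x₁ h0 hlt h1 => sK_cross_strict h0 hlt h1 (hbs hne)
  refine ⟨?_, ?_, ?_, part4, part5⟩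
  · rintro x₀ ⟨h00, h0D⟩ x₁ ⟨h10, h1D⟩ hle
    have p0 := hpos x₀ ⟨h00, h0D⟩
    have p1 := hpos x₁ ⟨h10, h1D⟩
    simp only
    rw [div_le_div_iff₀ p1 p0]
    exact part4 x₀ x₁ h00 hle h1D
  · rintro hne x₀ ⟨h00, h0D⟩ x₁ ⟨h10, h1D⟩ hlt
    have p0 := hpos x₀ ⟨h00, h0D⟩
    have p1 := hpos x₁ ⟨h10, h1D⟩
    simp only
    rw [div_lt_div_iff₀ p1 p0]
    exact part5 hne x₀ x₁ h00 hlt h1D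
  · rintro ⟨hK, hDeq⟩ x ⟨hx0, hxD⟩
    have hκ : 0 < κ := hKκ.mp hK
    have hs : 0 < Real.sqrt κ := Real.sqrt_pos.mpr hκ
    have hπD : Real.sqrt κ * D = Real.pi := by
      rw [hπ hK] at hDeq
      rw [hDeq, mul_div_assoc', mul_comm, mul_div_assoc, div_self (ne_of_gt hs), mul_one]
    have heq : sK κ (D - x) = sK κ x := by
      unfold sK
      rw [if_pos hκ, if_pos hκ]
      congr 1
      have : Real.sqrt κ * (D - x) = Real.pi - Real.sqrt κ * x := by
        rw [← hπD]; ring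
      rw [this, Real.sin_pi_sub]
    rw [heq, div_self (ne_of_gt (hpos x ⟨hx0, hxD⟩))]

end
end
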